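/- Let k be a field of characteristic zero. The Witt algebra over k is generated, as a Lie algebra, by the two elements e_{−2} and e_3, where e_n = z^{n+1} d/dz; that is, the smallest Lie subalgebra of the Lie algebra of k-linear derivations of k[z, z⁻¹] containing e_{−2} and e_3 is the span of {e_n}_{n ∈ ℤ}, the whole Witt algebra. -/

import Mathlib

set_option maxHeartbeats 1000000

open LaurentPolynomial

/-- The Witt algebra (the Lie algebra of `k`-linear derivations of `k[z,z⁻¹]`) is generated,
as a Lie algebra, by `e₋₂` and `e₃`, where `eₙ = z^{n+1} d/dz` is the derivation determined
by `eₙ(z^m) = m z^{m+n}`: the smallest Lie subalgebra containing `e₋₂` and `e₃` is the span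
of `{eₙ}_{n ∈ ℤ}`, which is the whole Witt algebra. -/
theorem witt_generated_by_two_elements (k : Type*) [Field k] [CharZero k]
    (e : ℤ → Derivation k (LaurentPolynomial k) (LaurentPolynomial k))
    (he : ∀ n m : ℤ, e n (LaurentPolynomial.T m) = (m : k) • LaurentPolynomial.T (m + n)) :
    (LieSubalgebra.lieSpan k
        (Derivation k (LaurentPolynomial k) (LaurentPolynomial k))
        {e (-2), e 3}).toSubmodule = Submodule.span k (Set.range e) ∧
      Submodule.span k (Set.range e) = ⊤ := by
  -- A derivation of `k[z,z⁻¹]` is determined by its values on the monomials `T n`.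
  have hext : ∀ (D1 D2 : Derivation k (LaurentPolynomial k) (LaurentPolynomial k)),
      (∀ n : ℤ, D1 (T n) = D2 (T n)) → D1 = D2 := by
    intro D1 D2 h
    have hlin : D1.toLinearMap = D2.toLinearMap := by
      apply AddMonoidAlgebra.lhom_ext'
      intro a
      apply LinearMap.ext_ring
      show D1 (AddMonoidAlgebra.single a 1) = D2 (AddMonoidAlgebra.single a 1)
      exact h a
    apply Derivation.ext
    intro a
    exact LinearMap.congr_fun hlin a
  -- The commutation relations of the Witt algebra.
  have hbr : ∀ n m : ℤ, ⁅e n, e m⁆ = ((m - n : ℤ) : k) • e (n + m) := by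
    intro n m
    apply hext
    intro p
    rw [Derivation.commutator_apply, he, he, Derivation.map_smul, Derivation.map_smul, he, he,
      Derivation.smul_apply, he, smul_smul, smul_smul, smul_smul,
      show p + m + n = p + (n + m) by ring, show p + n + m = p + (n + m) by ring,
      ← sub_smul]
    congr 1
    push_cast
    ring
  set S := LieSubalgebra.lieSpan k
      (Derivation k (LaurentPolynomial k) (LaurentPolynomial k)) {e (-2), e 3} with hS
  -- closure step for the generation argument
  have hstep : ∀ n m : ℤ, e n ∈ S → e m ∈ S → m - n ≠ 0 → e (n + m) ∈ S := by
    intro n m hn hm hne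
    have h1 : ((m - n : ℤ) : k) • e (n + m) ∈ S := by
      rw [← hbr n m]; exact S.lie_mem hn hm
    have h2 := S.smul_mem (((m - n : ℤ) : k))⁻¹ h1
    rwa [smul_smul, inv_mul_cancel₀ (by exact_mod_cast hne), one_smul] at h2
  have hm2 : e (-2) ∈ S := LieSubalgebra.subset_lieSpan (by simp)
  have h3 : e 3 ∈ S := LieSubalgebra.subset_lieSpan (by simp)
  have h1 : e 1 ∈ S := by simpa using hstep (-2) 3 hm2 h3 (by norm_num)
  have hm1 : e (-1) ∈ S := by simpa using hstep (-2) 1 hm2 h1 (by norm_num)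
  have h0 : e 0 ∈ S := by simpa using hstep (-1) 1 hm1 h1 (by norm_num)
  have h2 : e 2 ∈ S := by simpa using hstep (-1) 3 hm1 h3 (by norm_num)
  have hpos : ∀ n : ℤ, 2 ≤ n → e n ∈ S := by
    refine fun n hn => Int.le_induction (motive := fun n _ => e n ∈ S) h2 (fun n hn ih => ?_) n hn
    have := hstep 1 n h1 ih (by omega)
    rwa [add_comm] at this
  have hneg : ∀ n : ℤ, n ≤ -2 → e n ∈ S := by
    refine fun n hn => Int.le_induction_down (motive := fun n _ => e n ∈ S) hm2 (fun n hn ih => ?_) n hn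
    have := hstep (-1) n hm1 ih (by omega)
    rwa [show (-1) + n = n - 1 by ring] at this
  have hall : ∀ n : ℤ, e n ∈ S := by
    intro n
    rcases le_or_gt n (-2) with h | h
    · exact hneg n h
    rcases le_or_gt 2 n with h' | h'
    · exact hpos n h'
    interval_cases n
    · exact hm1
    · exact h0
    · exact h1
  -- The span of the `e n` is a Lie subalgebra.
  let W : LieSubalgebra k (Derivation k (LaurentPolynomial k) (LaurentPolynomial k)) :=
    { Submodule.span k (Set.range e) with
      lie_mem' := by
        intro x y hx hy
        induction hx using Submodule.span_induction with
        | mem a ha =>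
            induction hy using Submodule.span_induction with
            | mem b hb =>
                obtain ⟨n, rfl⟩ := ha
                obtain ⟨m, rfl⟩ := hb
                rw [hbr]
                exact Submodule.smul_mem _ _ (Submodule.subset_span ⟨n + m, rfl⟩)
            | zero => simp
            | add b c _ _ hb hc => rw [lie_add]; exact Submodule.add_mem _ hb hc
            | smul c b _ hb => rw [lie_smul]; exact Submodule.smul_mem _ _ hb
        | zero => simp
        | add a b _ _ ha hb => rw [add_lie]; exact Submodule.add_mem _ ha hb
        | smul c a _ ha => rw [smul_lie]; exact Submodule.smul_mem _ _ ha }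
  have hfirst : S.toSubmodule = Submodule.span k (Set.range e) := by
    apply le_antisymm
    · have : S ≤ W := by
        rw [hS, LieSubalgebra.lieSpan_le]
        rintro x (rfl | rfl)
        · exact Submodule.subset_span ⟨-2, rfl⟩
        · exact Submodule.subset_span ⟨3, rfl⟩
      exact this
    · rw [Submodule.span_le]
      rintro x ⟨n, rfl⟩
      exact hall n
  refine ⟨hfirst, ?_⟩
  -- Every derivation is a finite linear combination of the `e n`.
  -- First: `D (T n) = n • (T (n-1) * D (T 1))`.
  have hDT : ∀ (D : Derivation k (LaurentPolynomial k) (LaurentPolynomial k)) (n : ℤ),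
      D (T n) = (n : k) • (T (n - 1) * D (T 1)) := by
    intro D n
    induction n using Int.induction_on with
    | zero => simp [T_zero]
    | succ i ih =>
        have hT : (T ((i : ℤ) + 1) : LaurentPolynomial k) = T i * T 1 := by
          rw [← T_add]
        rw [hT, Derivation.leibniz, ih, show ((i:ℤ) + 1 - 1 : ℤ) = (i:ℤ) by ring,
          smul_comm (T 1 : LaurentPolynomial k), smul_eq_mul, smul_eq_mul,
          ← mul_assoc, ← T_add, show (1:ℤ) + ((i:ℤ) - 1) = (i:ℤ) by ring]
        push_cast [add_smul, one_smul]
        rw [add_comm]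
    | pred i ih =>
        have hT : (T (-(i:ℤ)) : LaurentPolynomial k) = T (-(i:ℤ) - 1) * T 1 := by
          rw [← T_add]; ring_nf
        have h0 := ih
        rw [hT, Derivation.leibniz] at h0
        have h1 : D (T (-(i:ℤ) - 1)) =
            T (-1) * (((-(i:ℤ) : ℤ) : k) • (T (-(i:ℤ) - 1) * D (T 1))
              - T (-(i:ℤ) - 1) * D (T 1)) := by
          rw [← h0, smul_eq_mul, smul_eq_mul, add_sub_cancel_left, ← mul_assoc, ← T_add]
          norm_num
        rw [h1, mul_sub, mul_smul_comm, ← mul_assoc, ← T_add,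
          show (-1 + (-(i:ℤ) - 1) : ℤ) = -(i:ℤ) - 1 - 1 by ring]
        rw [show ((-(i:ℤ) - 1 : ℤ) : k) = ((-(i:ℤ) : ℤ) : k) - 1 by push_cast; ring, sub_smul,
          one_smul]
  rw [Submodule.eq_top_iff']
  intro D
  set f := D (T 1) with hf
  have happly : ∀ (s : Finset ℤ) (g : ℤ → Derivation k (LaurentPolynomial k) (LaurentPolynomial k))
      (x : LaurentPolynomial k), (∑ i ∈ s, g i) x = ∑ i ∈ s, g i x := by
    intro s g x
    induction s using Finset.cons_induction with
    | empty => simp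
    | cons a s ha ih => rw [Finset.sum_cons, Finset.sum_cons, Derivation.add_apply, ih]
  have hkey : D = ∑ i ∈ f.coeff.support, f.coeff i • e (i - 1) := by
    apply hext
    intro n
    rw [happly, hDT D n, ← hf]
    have hrhs : (T (n - 1) : LaurentPolynomial k) * f = ∑ i ∈ f.coeff.support, f.coeff i • T (n - 1 + i) := by
      conv_lhs => rw [← AddMonoidAlgebra.sum_coeff_single f]
      rw [Finsupp.sum, Finset.mul_sum]
      refine Finset.sum_congr rfl fun i hi => ?_
      rw [show (AddMonoidAlgebra.single i (f.coeff i) : LaurentPolynomial k) = f.coeff i • T i by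
        rw [T, AddMonoidAlgebra.smul_single, smul_eq_mul, mul_one]]
      rw [mul_smul_comm, ← T_add]
    rw [hrhs, Finset.smul_sum]
    refine Finset.sum_congr rfl fun i hi => ?_
    rw [Derivation.smul_apply, he, smul_comm, show n + (i - 1) = n - 1 + i by ring]
  rw [hkey]
  exact Submodule.sum_mem _ fun i _ =>
    Submodule.smul_mem _ _ (Submodule.subset_span ⟨i - 1, rfl⟩)
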